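/- Let H₀, H₁ ∈ B(𝓗) be self-adjoint, let c ∈ ℝ, set H := H₀ + c·H₁, and assume that the spectra of H₀ and of H are both contained in [1,∞). With K₀ := ‖H₁·(√H₀)⁻¹‖, one has ‖√H₀·(√H)⁻¹‖ ≤ 1 + |c|·K₀. -/

import Mathlib

open MeasureTheory
set_option synthInstance.maxHeartbeats 1000000
set_option maxHeartbeats 1000000

variable {𝓗 : Type*} [NormedAddCommGroup 𝓗] [InnerProductSpace ℂ 𝓗] [CompleteSpace 𝓗]

lemma aux_one_le_sqrt (a : 𝓗 →L[ℂ] 𝓗) (hsa : IsSelfAdjoint a)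
    (hspec : spectrum ℝ a ⊆ Set.Ici 1) : 1 ≤ CFC.sqrt a := by
  have ha1 : (1 : 𝓗 →L[ℂ] 𝓗) ≤ a := CFC.one_le (R := ℝ) (fun x hx => hspec hx) hsa
  have ha0 : (0 : 𝓗 →L[ℂ] 𝓗) ≤ a := zero_le_one.trans ha1
  have hb0 : (0 : 𝓗 →L[ℂ] 𝓗) ≤ cfc Real.sqrt a := cfc_nonneg (fun x _ => Real.sqrt_nonneg x)
  have hbb : cfc Real.sqrt a * cfc Real.sqrt a = a := by
    rw [← cfc_mul ..]
    calc cfc (fun x => Real.sqrt x * Real.sqrt x) a = cfc (id : ℝ → ℝ) a := by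
          refine cfc_congr fun x hx => ?_
          exact Real.mul_self_sqrt (by have := hspec hx; simp at this ⊢; linarith)
      _ = a := cfc_id ℝ a
  rw [CFC.sqrt_unique hbb hb0]
  refine CFC.one_le (R := ℝ) ?_ (.of_nonneg hb0)
  intro x hx
  rw [cfc_map_spectrum (R := ℝ) Real.sqrt a] at hx
  obtain ⟨y, hy, rfl⟩ := hx
  have : (1 : ℝ) ≤ y := hspec hy
  exact Real.one_le_sqrt.mpr this


/-- Let `H := H₀ + c·H₁` with `H₀, H₁` self-adjoint and spectra of `H₀` and `H`
in `[1,∞)`.  With `K₀ := ‖H₁·(√H₀)⁻¹‖`, one has `‖√H₀·(√H)⁻¹‖ ≤ 1 + |c|·K₀`. -/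
theorem stmt_10 (H₀ H₁ : 𝓗 →L[ℂ] 𝓗) (hH₀ : IsSelfAdjoint H₀) (hH₁ : IsSelfAdjoint H₁)
    (c : ℝ) (H : 𝓗 →L[ℂ] 𝓗) (hH : H = H₀ + c • H₁)
    (hspec₀ : spectrum ℝ H₀ ⊆ Set.Ici 1) (hspec : spectrum ℝ H ⊆ Set.Ici 1)
    (K₀ : ℝ) (hK₀ : K₀ = ‖H₁ * Ring.inverse (CFC.sqrt H₀)‖) :
    ‖CFC.sqrt H₀ * Ring.inverse (CFC.sqrt H)‖ ≤ 1 + |c| * K₀ := by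
  have hK₀0 : 0 ≤ K₀ := hK₀ ▸ norm_nonneg _
  rcases subsingleton_or_nontrivial (𝓗 →L[ℂ] 𝓗) with hsub | hnt
  · have : ‖CFC.sqrt H₀ * Ring.inverse (CFC.sqrt H)‖ = 0 := by
      rw [Subsingleton.elim (CFC.sqrt H₀ * Ring.inverse (CFC.sqrt H)) 0, norm_zero]
    rw [this]
    positivity
  have hsm : IsSelfAdjoint (c • H₁) := by
    rw [IsSelfAdjoint, star_smul, star_trivial, hH₁.star_eq]
  have hsaH : IsSelfAdjoint H := by
    rw [hH]
    exact hH₀.add hsm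
  set A := CFC.sqrt H₀ with hA
  set B := CFC.sqrt H with hB
  have hA1 : (1 : 𝓗 →L[ℂ] 𝓗) ≤ A := aux_one_le_sqrt H₀ hH₀ hspec₀
  have hB1 : (1 : 𝓗 →L[ℂ] 𝓗) ≤ B := aux_one_le_sqrt H hsaH hspec
  have hA0 : (0 : 𝓗 →L[ℂ] 𝓗) ≤ A := zero_le_one.trans hA1
  have hB0 : (0 : 𝓗 →L[ℂ] 𝓗) ≤ B := zero_le_one.trans hB1
  have hAu : IsUnit A := CStarAlgebra.isUnit_of_le 1 hA1
  have hBu : IsUnit B := CStarAlgebra.isUnit_of_le 1 hB1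
  obtain ⟨u, hu⟩ := hBu
  have huinv : Ring.inverse B = (↑u⁻¹ : 𝓗 →L[ℂ] 𝓗) := by rw [← hu, Ring.inverse_unit]
  have hu1 : (1 : 𝓗 →L[ℂ] 𝓗) ≤ u := hu ▸ hB1
  have huinv0 : (0 : 𝓗 →L[ℂ] 𝓗) ≤ ↑u⁻¹ := CFC.inv_nonneg_of_nonneg u (hu ▸ hB0)
  have huinv1 : (↑u⁻¹ : 𝓗 →L[ℂ] 𝓗) ≤ 1 := CStarAlgebra.inv_le_one hu1
  have hnormuinv : ‖(↑u⁻¹ : 𝓗 →L[ℂ] 𝓗)‖ ≤ 1 := by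
    have := CStarAlgebra.norm_le_norm_of_nonneg_of_le huinv0 huinv1
    simpa using this
  set t := ‖A * (↑u⁻¹ : 𝓗 →L[ℂ] 𝓗)‖ with ht
  have hsaA : IsSelfAdjoint A := .of_nonneg hA0
  have hsauinv : IsSelfAdjoint (↑u⁻¹ : 𝓗 →L[ℂ] 𝓗) := .of_nonneg huinv0
  -- A * A = H₀
  have hAA : A * A = H₀ := CFC.sqrt_mul_sqrt_self H₀ (zero_le_one.trans (CFC.one_le (R := ℝ) (fun x hx => hspec₀ hx) hH₀))
  have hBB : (↑u : 𝓗 →L[ℂ] 𝓗) * ↑u = H := by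
    rw [hu]; exact CFC.sqrt_mul_sqrt_self H (zero_le_one.trans (CFC.one_le (R := ℝ) (fun x hx => hspec hx) hsaH))
  -- key identity
  have hkey : (↑u⁻¹ : 𝓗 →L[ℂ] 𝓗) * A * (A * ↑u⁻¹) = 1 - c • (↑u⁻¹ * H₁ * ↑u⁻¹) := by
    have h1 : (↑u⁻¹ : 𝓗 →L[ℂ] 𝓗) * A * (A * ↑u⁻¹) = ↑u⁻¹ * (A * A) * ↑u⁻¹ := by
      noncomm_ring
    rw [h1, hAA]
    have hH₀' : H₀ = H - c • H₁ := by rw [hH]; abel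
    rw [hH₀', ← hBB]
    have : (↑u⁻¹ : 𝓗 →L[ℂ] 𝓗) * (↑u * ↑u - c • H₁) * ↑u⁻¹
        = (↑u⁻¹ * ↑u) * (↑u * ↑u⁻¹) - c • (↑u⁻¹ * H₁ * ↑u⁻¹) := by
      simp only [mul_sub, sub_mul, mul_smul_comm, smul_mul_assoc]
      noncomm_ring
    rw [this, u.inv_mul, u.mul_inv, one_mul]
  -- t^2 bound
  have hconj : (↑u⁻¹ : 𝓗 →L[ℂ] 𝓗) * H₁ * ↑u⁻¹ = ↑u⁻¹ * (H₁ * Ring.inverse A) * (A * ↑u⁻¹) := by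
    have h2 : H₁ * Ring.inverse A * A = H₁ := by
      rw [mul_assoc, Ring.inverse_mul_cancel _ hAu, mul_one]
    calc (↑u⁻¹ : 𝓗 →L[ℂ] 𝓗) * H₁ * ↑u⁻¹ = ↑u⁻¹ * (H₁ * Ring.inverse A * A) * ↑u⁻¹ := by
          rw [h2]
      _ = ↑u⁻¹ * (H₁ * Ring.inverse A) * (A * ↑u⁻¹) := by noncomm_ring
  have hmid : ‖(↑u⁻¹ : 𝓗 →L[ℂ] 𝓗) * H₁ * ↑u⁻¹‖ ≤ K₀ * t := by
    rw [hconj]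
    calc ‖(↑u⁻¹ : 𝓗 →L[ℂ] 𝓗) * (H₁ * Ring.inverse A) * (A * ↑u⁻¹)‖
        ≤ ‖(↑u⁻¹ : 𝓗 →L[ℂ] 𝓗) * (H₁ * Ring.inverse A)‖ * t := norm_mul_le _ _
      _ ≤ (‖(↑u⁻¹ : 𝓗 →L[ℂ] 𝓗)‖ * ‖H₁ * Ring.inverse A‖) * t :=
          mul_le_mul_of_nonneg_right (norm_mul_le _ _) (norm_nonneg _)
      _ ≤ (1 * K₀) * t := by rw [hK₀]; gcongr
      _ = K₀ * t := by ring
  have ht2 : t ^ 2 ≤ 1 + |c| * K₀ * t := by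
    have hcs : t ^ 2 = ‖(↑u⁻¹ : 𝓗 →L[ℂ] 𝓗) * A * (A * ↑u⁻¹)‖ := by
      rw [ht, sq, ← CStarRing.norm_star_mul_self]
      congr 1
      rw [star_mul, hsaA.star_eq, hsauinv.star_eq, mul_assoc]
    rw [hcs, hkey]
    calc ‖(1 : 𝓗 →L[ℂ] 𝓗) - c • (↑u⁻¹ * H₁ * ↑u⁻¹)‖
        ≤ ‖(1 : 𝓗 →L[ℂ] 𝓗)‖ + ‖c • ((↑u⁻¹ : 𝓗 →L[ℂ] 𝓗) * H₁ * ↑u⁻¹)‖ := norm_sub_le _ _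
      _ = 1 + |c| * ‖(↑u⁻¹ : 𝓗 →L[ℂ] 𝓗) * H₁ * ↑u⁻¹‖ := by
          rw [norm_one, norm_smul, Real.norm_eq_abs]
      _ ≤ 1 + |c| * (K₀ * t) := by gcongr
      _ = 1 + |c| * K₀ * t := by ring
  have ht0 : 0 ≤ t := norm_nonneg _
  have hgoal : t ≤ 1 + |c| * K₀ := by
    nlinarith [abs_nonneg c, mul_nonneg (abs_nonneg c) hK₀0]
  rw [huinv]
  exact hgoal
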